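/- Let a, b > 0 with a ≠ b, let c ∈ (0, min(a,b)) and c' > max(a,b), and let x ∈ ℝ. Set R(z) = (a+z)(b+z)/((a−z)(b−z)) and f(z) = R(z) e^{−xz + z³/3}. Then both integrals below converge absolutely and (1/2π) ∫_ℝ f(c + iy) dy = (1/2π) ∫_ℝ f(c' + iy) dy + 2 ((a+b)/(a−b)) · ( b e^{−xb + b³/3} − a e^{−xa + a³/3} ). (This is the residue decomposition obtained by moving the contour in the definition of the function A^{(a,b)} across the poles at z = a and z = b.) -/

import Mathlib

open Complex MeasureTheory Real

/-- `f(z) = (a+z)(b+z)/((a−z)(b−z)) · e^{−xz + z³/3}`. -/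
noncomputable def fShift (a b x : ℝ) (z : ℂ) : ℂ :=
  ((a + z) * (b + z) / ((a - z) * (b - z))) * Complex.exp (-(x : ℂ) * z + z ^ 3 / 3)

set_option maxHeartbeats 1000000

open Filter Topology

noncomputable def Eab (x : ℝ) (z : ℂ) : ℂ := Complex.exp (-(x : ℂ) * z + z ^ 3 / 3)

lemma entire_Eab (x : ℝ) : Differentiable ℂ (Eab x) := by
  unfold Eab
  apply Complex.differentiable_exp.comp
  fun_prop

lemma entire_dslope {E : ℂ → ℂ} (hE : Differentiable ℂ E) (a : ℂ) :
    Differentiable ℂ (dslope E a) := by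
  intro z
  rcases eq_or_ne z a with rfl | h
  · obtain ⟨p, hp⟩ := hE.analyticAt z
    exact hp.has_fpower_series_dslope_fslope.analyticAt.differentiableAt
  · exact (differentiableAt_dslope_of_ne h).mpr (hE.differentiableAt)

lemma decomp (a b x : ℝ) (hab : a ≠ b) (P Q : ℂ)
    (hP : P = 2 * (a : ℂ) * ((a : ℂ) + b) / ((b : ℂ) - a))
    (hQ : Q = 2 * (b : ℂ) * ((a : ℂ) + b) / ((a : ℂ) - b))
    {z : ℂ} (hza : z ≠ (a : ℂ)) (hzb : z ≠ (b : ℂ)) :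
    Eab x z - P * dslope (Eab x) (a : ℂ) z - Q * dslope (Eab x) (b : ℂ) z
    = fShift a b x z + P * Eab x a * (z - a)⁻¹ + Q * Eab x b * (z - b)⁻¹ := by
  subst hP hQ
  have hab' : (a : ℂ) ≠ (b : ℂ) := by exact_mod_cast Complex.ofReal_injective.ne hab
  have h1 : z - (a : ℂ) ≠ 0 := sub_ne_zero.mpr hza
  have h2 : z - (b : ℂ) ≠ 0 := sub_ne_zero.mpr hzb
  have h3 : (a : ℂ) - z ≠ 0 := sub_ne_zero.mpr (Ne.symm hza)
  have h4 : (b : ℂ) - z ≠ 0 := sub_ne_zero.mpr (Ne.symm hzb)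
  have h5 : (b : ℂ) - a ≠ 0 := sub_ne_zero.mpr (Ne.symm hab')
  have h6 : (a : ℂ) - b ≠ 0 := sub_ne_zero.mpr hab'
  rw [dslope_of_ne _ hza, dslope_of_ne _ hzb, slope_def_field, slope_def_field]
  unfold fShift Eab
  field_simp
  ring

lemma pole_integral {k : ℝ} (hk : k ≠ 0) (T : ℝ) :
    ∫ y in (-T)..T, ((k : ℂ) + y * I)⁻¹ = ((2 * Real.arctan (T / k) : ℝ) : ℂ) := by
  have hne : ∀ y : ℝ, ((k : ℂ) + y * I) ≠ 0 := by
    intro y h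
    apply hk
    simpa using congrArg Complex.re h
  have hcont : Continuous fun y : ℝ => ((k : ℂ) + y * I)⁻¹ := by
    apply Continuous.inv₀ (by continuity) hne
  have key : ∀ y : ℝ, HasDerivAt
      (fun s : ℝ => ((Real.arctan (s / k) : ℝ) : ℂ) - I / 2 * ((Real.log (k ^ 2 + s ^ 2) : ℝ) : ℂ))
      (((k : ℂ) + y * I)⁻¹) y := by
    intro y
    have hk2 : k ^ 2 + y ^ 2 ≠ 0 := by positivity
    have h1 : HasDerivAt (fun s : ℝ => Real.arctan (s / k)) ((1 / (1 + (y / k) ^ 2)) * (1 / k)) y := by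
      exact (Real.hasDerivAt_arctan (y / k)).comp y ((hasDerivAt_id y).div_const k)
    have h2 : HasDerivAt (fun s : ℝ => Real.log (k ^ 2 + s ^ 2)) ((2 * y) / (k ^ 2 + y ^ 2)) y := by
      have h3 : HasDerivAt (fun s : ℝ => k ^ 2 + s ^ 2) (2 * y) y := by
        simpa using (hasDerivAt_pow 2 y).const_add (k ^ 2)
      have := (Real.hasDerivAt_log hk2).comp y h3
      simpa [Function.comp_def, div_eq_inv_mul, mul_comm] using this
    have h := (h1.ofReal_comp).sub ((h2.ofReal_comp).const_mul (I / 2))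
    refine h.congr_deriv ?_
    have hinv : ((k : ℂ) + y * I) * (((k / (k ^ 2 + y ^ 2) : ℝ) : ℂ) - ((y / (k ^ 2 + y ^ 2) : ℝ) : ℂ) * I) = 1 := by
      have hk2C : ((k : ℂ) ^ 2 + (y : ℂ) ^ 2) ≠ 0 := by
        exact_mod_cast (Complex.ofReal_ne_zero.mpr hk2 : ((k ^ 2 + y ^ 2 : ℝ) : ℂ) ≠ 0)
      push_cast
      field_simp
      ring_nf
      rw [Complex.I_sq]
      ring
    rw [inv_eq_of_mul_eq_one_right hinv]
    have e1 : k / (k ^ 2 + y ^ 2) = 1 / (1 + (y / k) ^ 2) * (1 / k) := by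
      field_simp
    rw [e1]
    push_cast
    ring
  rw [intervalIntegral.integral_eq_sub_of_hasDerivAt (fun y _ => key y)
    (hcont.intervalIntegrable _ _)]
  have : Real.arctan (-T / k) = - Real.arctan (T / k) := by
    rw [neg_div, Real.arctan_neg]
  rw [this]
  push_cast
  ring_nf

lemma re_arg (x σ y : ℝ) :
    (-(x : ℂ) * ((σ : ℂ) + y * I) + ((σ : ℂ) + y * I) ^ 3 / 3).re
      = -x * σ + (σ ^ 3 - 3 * σ * y ^ 2) / 3 := by
  have h : ((σ : ℂ) + y * I) ^ 3 = ((σ ^ 3 - 3 * σ * y ^ 2 : ℝ) : ℂ) + ((3 * σ ^ 2 * y - y ^ 3 : ℝ) : ℂ) * I := by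
    apply Complex.ext <;> simp [pow_succ, Complex.mul_re, Complex.mul_im] <;> ring
  rw [h]
  simp [Complex.div_re, Complex.mul_re, Complex.normSq_apply]
  simp [← Complex.ofReal_pow]

lemma norm_fShift (a b x : ℝ) (z : ℂ) :
    ‖fShift a b x z‖ = ‖(a : ℂ) + z‖ * ‖(b : ℂ) + z‖ / (‖(a : ℂ) - z‖ * ‖(b : ℂ) - z‖)
      * Real.exp ((-(x : ℂ) * z + z ^ 3 / 3).re) := by
  rw [fShift, norm_mul, norm_div, norm_mul, norm_mul,
    Complex.norm_exp]

lemma norm_ratio_le {u σ : ℝ} (hu : 0 < u) (hσ : 0 < σ) (hne : σ ≠ u) (y : ℝ) :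
    ‖(u : ℂ) + ((σ : ℂ) + y * I)‖ ≤ max 1 ((u + σ) / |u - σ|) * ‖(u : ℂ) - ((σ : ℂ) + y * I)‖ := by
  set M := max 1 ((u + σ) / |u - σ|) with hM
  have habs : 0 < |u - σ| := abs_pos.mpr (sub_ne_zero.mpr (Ne.symm hne))
  have hM0 : (0 : ℝ) ≤ M := le_trans zero_le_one (le_max_left _ _)
  have hMge : u + σ ≤ M * |u - σ| := (div_le_iff₀ habs).mp (le_max_right _ _)
  have key : (u + σ) ^ 2 + y ^ 2 ≤ M ^ 2 * ((u - σ) ^ 2 + y ^ 2) := by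
    have h1 : (u + σ) ^ 2 ≤ M ^ 2 * (u - σ) ^ 2 := by
      nlinarith [abs_nonneg (u - σ), _root_.sq_abs (u - σ), hu.le, hσ.le]
    have h2 : y ^ 2 ≤ M ^ 2 * y ^ 2 := by
      have hM1 : (1:ℝ) ≤ M := le_max_left _ _
      have hM2 : (1:ℝ) ≤ M ^ 2 := by nlinarith
      calc y ^ 2 = 1 * y ^ 2 := by ring
        _ ≤ M ^ 2 * y ^ 2 := mul_le_mul_of_nonneg_right hM2 (sq_nonneg y)
    linarith
  have e1 : (u : ℂ) + ((σ : ℂ) + y * I) = ((u + σ : ℝ) : ℂ) + (y : ℝ) * I := by push_cast; ring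
  have e2 : (u : ℂ) - ((σ : ℂ) + y * I) = ((u - σ : ℝ) : ℂ) + (-y : ℝ) * I := by push_cast; ring
  rw [e1, e2, Complex.norm_add_mul_I, Complex.norm_add_mul_I]
  calc Real.sqrt ((u + σ) ^ 2 + y ^ 2) ≤ Real.sqrt (M ^ 2 * ((u - σ) ^ 2 + (-y) ^ 2)) := by
        apply Real.sqrt_le_sqrt; simpa using key
    _ = M * Real.sqrt ((u - σ) ^ 2 + (-y) ^ 2) := by
        rw [Real.sqrt_mul (sq_nonneg M), Real.sqrt_sq hM0]

lemma line_ne {u σ : ℝ} (hne : σ ≠ u) (y : ℝ) : ((σ : ℂ) + y * I) ≠ (u : ℂ) := by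
  intro h
  apply hne
  simpa using congrArg Complex.re h

lemma continuous_line (a b x σ : ℝ) (hsa : σ ≠ a) (hsb : σ ≠ b) :
    Continuous fun y : ℝ => fShift a b x ((σ : ℂ) + y * I) := by
  unfold fShift
  apply Continuous.mul
  · apply Continuous.div (by continuity) (by continuity)
    intro y
    apply mul_ne_zero
    · rw [sub_ne_zero]; exact (line_ne hsa y).symm
    · rw [sub_ne_zero]; exact (line_ne hsb y).symm
  · exact Complex.continuous_exp.comp (by continuity)

lemma integrable_line (a b x σ : ℝ) (ha : 0 < a) (hb : 0 < b) (hσ : 0 < σ)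
    (hsa : σ ≠ a) (hsb : σ ≠ b) :
    Integrable fun y : ℝ => fShift a b x ((σ : ℂ) + y * I) := by
  set Ma := max 1 ((a + σ) / |a - σ|) with hMa
  set Mb := max 1 ((b + σ) / |b - σ|) with hMb
  set K := Ma * Mb * Real.exp (-x * σ + σ ^ 3 / 3) with hK
  apply Integrable.mono' (((integrable_exp_neg_mul_sq hσ).const_mul K))
  · exact (continuous_line a b x σ hsa hsb).aestronglyMeasurable
  · filter_upwards with y
    set z : ℂ := (σ : ℂ) + y * I with hz
    have hden1 : ‖(a : ℂ) - z‖ > 0 := by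
      exact norm_sub_pos_iff.mpr (line_ne hsa y).symm
    have hden2 : ‖(b : ℂ) - z‖ > 0 := by
      exact norm_sub_pos_iff.mpr (line_ne hsb y).symm
    rw [norm_fShift, hz, re_arg]
    have hratio : ‖(a : ℂ) + z‖ * ‖(b : ℂ) + z‖ / (‖(a : ℂ) - z‖ * ‖(b : ℂ) - z‖) ≤ Ma * Mb := by
      rw [div_le_iff₀ (by positivity)]
      calc ‖(a : ℂ) + z‖ * ‖(b : ℂ) + z‖
          ≤ (Ma * ‖(a : ℂ) - z‖) * (Mb * ‖(b : ℂ) - z‖) := by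
            apply mul_le_mul (norm_ratio_le ha hσ hsa y) (norm_ratio_le hb hσ hsb y)
              (norm_nonneg _) (by positivity)
        _ = Ma * Mb * (‖(a : ℂ) - z‖ * ‖(b : ℂ) - z‖) := by ring
    have hexp : Real.exp (-x * σ + (σ ^ 3 - 3 * σ * y ^ 2) / 3)
        = Real.exp (-x * σ + σ ^ 3 / 3) * Real.exp (-σ * y ^ 2) := by
      rw [← Real.exp_add]; ring_nf
    rw [hexp, hK]
    have h2 : (0:ℝ) ≤ Real.exp (-x * σ + σ ^ 3 / 3) * Real.exp (-σ * y ^ 2) := by positivity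
    calc ‖(a : ℂ) + z‖ * ‖(b : ℂ) + z‖ / (‖(a : ℂ) - z‖ * ‖(b : ℂ) - z‖)
          * (Real.exp (-x * σ + σ ^ 3 / 3) * Real.exp (-σ * y ^ 2))
        ≤ Ma * Mb * (Real.exp (-x * σ + σ ^ 3 / 3) * Real.exp (-σ * y ^ 2)) := by
          exact mul_le_mul_of_nonneg_right hratio h2
      _ = Ma * Mb * Real.exp (-x * σ + σ ^ 3 / 3) * Real.exp (-σ * y ^ 2) := by ring

lemma fShift_horiz (a b x : ℝ) (ha : 0 < a) (hb : 0 < b) {c c' t s : ℝ} (hc0 : 0 < c)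
    (hcc' : c < c') (ht : t ∈ Set.uIoc c c') (hs : 1 ≤ |s|) :
    ‖fShift a b x ((t : ℂ) + (s : ℂ) * I)‖ ≤
      (a + c' + 1) * (b + c' + 1) * Real.exp (|x| * c' + c' ^ 3 / 3) * Real.exp (-c * s ^ 2) := by
  rw [Set.uIoc_of_le hcc'.le] at ht
  obtain ⟨ht1, ht2⟩ := ht
  have ht0 : 0 < t := hc0.trans ht1
  have hc'0 : 0 < c' := hc0.trans hcc'
  have hs2 : 1 ≤ s ^ 2 := by nlinarith [_root_.sq_abs s, abs_nonneg s]
  set z : ℂ := (t : ℂ) + (s : ℂ) * I with hzdef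
  have hnum : ∀ u : ℝ, 0 < u → ‖(u : ℂ) + z‖ ≤ (u + c' + 1) * |s| := by
    intro u hu
    have e : (u : ℂ) + z = ((u + t : ℝ) : ℂ) + (s : ℝ) * I := by rw [hzdef]; push_cast; ring
    rw [e, Complex.norm_add_mul_I]
    have key : (u + t) ^ 2 + s ^ 2 ≤ ((u + c' + 1) * |s|) ^ 2 := by
      have h1 : (u + t) ^ 2 ≤ (u + c') ^ 2 := by nlinarith
      have h2 : (u + c') ^ 2 ≤ (u + c') ^ 2 * s ^ 2 := by nlinarith [sq_nonneg (u + c')]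
      have h3 : ((u + c' + 1) * |s|) ^ 2 = ((u + c') ^ 2 + 2 * (u + c') + 1) * s ^ 2 := by
        rw [mul_pow, _root_.sq_abs]; ring
      nlinarith [sq_nonneg s]
    calc Real.sqrt ((u + t) ^ 2 + s ^ 2) ≤ Real.sqrt (((u + c' + 1) * |s|) ^ 2) :=
          Real.sqrt_le_sqrt key
      _ = (u + c' + 1) * |s| := Real.sqrt_sq (mul_nonneg (by nlinarith) (abs_nonneg s))
  have hden : ∀ u : ℝ, |s| ≤ ‖(u : ℂ) - z‖ := by
    intro u
    have e : ((u : ℂ) - z).im = -s := by rw [hzdef]; simp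
    calc |s| = |((u : ℂ) - z).im| := by rw [e, abs_neg]
      _ ≤ ‖((u : ℂ) - z)‖ := Complex.abs_im_le_norm _
      _ = ‖(u : ℂ) - z‖ := rfl
  have hratio : ‖(a : ℂ) + z‖ * ‖(b : ℂ) + z‖ / (‖(a : ℂ) - z‖ * ‖(b : ℂ) - z‖)
      ≤ (a + c' + 1) * (b + c' + 1) := by
    have hs0 : (0:ℝ) < |s| := lt_of_lt_of_le one_pos hs
    have hpos : 0 < ‖(a : ℂ) - z‖ * ‖(b : ℂ) - z‖ := by
      have h1 := hden a; have h2 := hden b; nlinarith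
    rw [div_le_iff₀ hpos]
    calc ‖(a : ℂ) + z‖ * ‖(b : ℂ) + z‖ ≤ ((a + c' + 1) * |s|) * ((b + c' + 1) * |s|) :=
          mul_le_mul (hnum a ha) (hnum b hb) (norm_nonneg _) (mul_nonneg (by nlinarith) (abs_nonneg s))
      _ = (a + c' + 1) * (b + c' + 1) * (|s| * |s|) := by ring
      _ ≤ (a + c' + 1) * (b + c' + 1) * (‖(a : ℂ) - z‖ * ‖(b : ℂ) - z‖) := by
          apply mul_le_mul_of_nonneg_left
            (mul_le_mul (hden a) (hden b) (abs_nonneg s) (norm_nonneg _))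
          exact mul_nonneg (by nlinarith) (by nlinarith)
  have hre : (-(x : ℂ) * z + z ^ 3 / 3).re ≤ |x| * c' + c' ^ 3 / 3 + (-c * s ^ 2) := by
    rw [hzdef, re_arg]
    have e1 : -x * t ≤ |x| * c' := by nlinarith [neg_abs_le x, abs_nonneg x]
    have e2 : t ^ 3 ≤ c' ^ 3 := pow_le_pow_left₀ ht0.le ht2 3
    have e3 : c * s ^ 2 ≤ t * s ^ 2 := by nlinarith [sq_nonneg s]
    linarith
  have hfinal : ‖fShift a b x z‖
      ≤ (a + c' + 1) * (b + c' + 1) * Real.exp (|x| * c' + c' ^ 3 / 3 + (-c * s ^ 2)) := by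
    rw [norm_fShift]
    exact mul_le_mul hratio (Real.exp_le_exp.mpr hre) (Real.exp_nonneg _)
      (mul_nonneg (by nlinarith) (by nlinarith))
  refine le_trans hfinal (le_of_eq ?_)
  rw [Real.exp_add]
  ring

lemma tendsto_two_arctan_pos {k : ℝ} (hk : 0 < k) :
    Tendsto (fun T : ℝ => ((2 * Real.arctan (T / k) : ℝ) : ℂ)) atTop (𝓝 ((Real.pi : ℝ) : ℂ)) := by
  have h1 : Tendsto (fun T : ℝ => T / k) atTop atTop := tendsto_id.atTop_div_const hk
  have h2 : Tendsto (fun T : ℝ => Real.arctan (T / k)) atTop (𝓝 (Real.pi / 2)) :=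
    (tendsto_nhds_of_tendsto_nhdsWithin Real.tendsto_arctan_atTop).comp h1
  have h3 : Tendsto (fun T : ℝ => 2 * Real.arctan (T / k)) atTop (𝓝 Real.pi) := by
    convert h2.const_mul (2 : ℝ) using 2
    ring
  exact (Complex.continuous_ofReal.tendsto _).comp h3

lemma tendsto_two_arctan_neg {k : ℝ} (hk : k < 0) :
    Tendsto (fun T : ℝ => ((2 * Real.arctan (T / k) : ℝ) : ℂ)) atTop (𝓝 ((-Real.pi : ℝ) : ℂ)) := by
  have h1 : Tendsto (fun T : ℝ => T / k) atTop atBot := tendsto_id.atTop_div_const_of_neg hk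
  have h2 : Tendsto (fun T : ℝ => Real.arctan (T / k)) atTop (𝓝 (-(Real.pi / 2))) :=
    (tendsto_nhds_of_tendsto_nhdsWithin Real.tendsto_arctan_atBot).comp h1
  have h3 : Tendsto (fun T : ℝ => 2 * Real.arctan (T / k)) atTop (𝓝 (-Real.pi)) := by
    convert h2.const_mul (2 : ℝ) using 2
    ring
  exact (Complex.continuous_ofReal.tendsto _).comp h3

/-- **Residue decomposition for the crossover function `A^{(a,b)}`:** moving the contour
from `c + iℝ` (with `0 < c < min(a,b)`) to `c' + iℝ` (with `c' > max(a,b)`) across the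
poles at `z = a` and `z = b` yields
`(1/2π)∫_{c+iℝ} f = (1/2π)∫_{c'+iℝ} f + 2((a+b)/(a−b))·(b e^{−xb+b³/3} − a e^{−xa+a³/3})`. -/
theorem contour_shift_residues (a b c c' x : ℝ) (ha : 0 < a) (hb : 0 < b) (hab : a ≠ b)
    (hc0 : 0 < c) (hc1 : c < min a b) (hc' : max a b < c') :
    MeasureTheory.Integrable (fun y : ℝ => fShift a b x ((c : ℂ) + (y : ℂ) * I)) ∧
    MeasureTheory.Integrable (fun y : ℝ => fShift a b x ((c' : ℂ) + (y : ℂ) * I)) ∧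
    (1 / (2 * Real.pi)) * (∫ y : ℝ, fShift a b x ((c : ℂ) + (y : ℂ) * I))
      = (1 / (2 * Real.pi)) * (∫ y : ℝ, fShift a b x ((c' : ℂ) + (y : ℂ) * I)) +
          2 * (((a : ℂ) + b) / ((a : ℂ) - b)) *
            ((b : ℂ) * Complex.exp (-(x : ℂ) * b + (b : ℂ) ^ 3 / 3) -
              (a : ℂ) * Complex.exp (-(x : ℂ) * a + (a : ℂ) ^ 3 / 3)) := by
  have hca : c < a := lt_of_lt_of_le hc1 (min_le_left a b)
  have hcb : c < b := lt_of_lt_of_le hc1 (min_le_right a b)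
  have hac' : a < c' := lt_of_le_of_lt (le_max_left a b) hc'
  have hbc' : b < c' := lt_of_le_of_lt (le_max_right a b) hc'
  have hcc' : c < c' := hca.trans hac'
  have hc'0 : 0 < c' := hc0.trans hcc'
  have hab' : (a : ℂ) ≠ (b : ℂ) := by exact_mod_cast Complex.ofReal_injective.ne hab
  have h5 : (b : ℂ) - a ≠ 0 := sub_ne_zero.mpr (Ne.symm hab')
  have h6 : (a : ℂ) - b ≠ 0 := sub_ne_zero.mpr hab'
  set P : ℂ := 2 * (a : ℂ) * ((a : ℂ) + b) / ((b : ℂ) - a) with hP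
  set Q : ℂ := 2 * (b : ℂ) * ((a : ℂ) + b) / ((a : ℂ) - b) with hQ
  set G : ℂ → ℂ :=
    fun z => Eab x z - P * dslope (Eab x) (a : ℂ) z - Q * dslope (Eab x) (b : ℂ) z with hGdef
  have hG : Differentiable ℂ G :=
    (((entire_Eab x).sub ((entire_dslope (entire_Eab x) _).const_mul P)).sub
      ((entire_dslope (entire_Eab x) _).const_mul Q))
  have hGeq : ∀ z : ℂ, z ≠ (a : ℂ) → z ≠ (b : ℂ) →
      G z = fShift a b x z + P * Eab x a * (z - a)⁻¹ + Q * Eab x b * (z - b)⁻¹ :=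
    fun z h1 h2 => decomp a b x hab P Q hP hQ h1 h2
  have int_c : Integrable fun y : ℝ => fShift a b x ((c : ℂ) + (y : ℂ) * I) :=
    integrable_line a b x c ha hb hc0 hca.ne hcb.ne
  have int_c' : Integrable fun y : ℝ => fShift a b x ((c' : ℂ) + (y : ℂ) * I) :=
    integrable_line a b x c' ha hb hc'0 hac'.ne' hbc'.ne'
  refine ⟨int_c, int_c', ?_⟩
  -- the rectangle contour identity
  have rect : ∀ T : ℝ,
      (∫ t in c..c', G ((t : ℂ) + ((-T : ℝ) : ℂ) * I))
        - (∫ t in c..c', G ((t : ℂ) + ((T : ℝ) : ℂ) * I))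
        + I • (∫ y in (-T)..T, G ((c' : ℂ) + (y : ℂ) * I))
        - I • ∫ y in (-T)..T, G ((c : ℂ) + (y : ℂ) * I) = 0 :=
    fun T => Complex.integral_boundary_rect_eq_zero_of_differentiableOn G ⟨c, -T⟩ ⟨c', T⟩
      hG.differentiableOn
  -- bound on the horizontal segments
  set C1 : ℝ := (a + c' + 1) * (b + c' + 1) * Real.exp (|x| * c' + c' ^ 3 / 3) with hC1
  set D : ℝ := ‖P * Eab x a‖ + ‖Q * Eab x b‖ with hD
  have hhoriz : ∀ s : ℝ, 1 ≤ |s| →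
      ‖∫ t in c..c', G ((t : ℂ) + ((s : ℝ) : ℂ) * I)‖
        ≤ (C1 * Real.exp (-c * s ^ 2) + D / |s|) * |c' - c| := by
    intro s hs
    have hs0 : (0 : ℝ) < |s| := lt_of_lt_of_le one_pos hs
    have hsne : s ≠ 0 := by
      intro h
      rw [h] at hs0
      simp at hs0
    apply intervalIntegral.norm_integral_le_of_norm_le_const
    intro t ht
    have hza : ((t : ℂ) + ((s : ℝ) : ℂ) * I) ≠ (a : ℂ) := by
      intro h; apply hsne; simpa using congrArg Complex.im h
    have hzb : ((t : ℂ) + ((s : ℝ) : ℂ) * I) ≠ (b : ℂ) := by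
      intro h; apply hsne; simpa using congrArg Complex.im h
    rw [hGeq _ hza hzb]
    have hb1 : ‖fShift a b x ((t : ℂ) + ((s : ℝ) : ℂ) * I)‖ ≤ C1 * Real.exp (-c * s ^ 2) :=
      fShift_horiz a b x ha hb hc0 hcc' ht hs
    have hb2 : ∀ (W : ℂ) (u : ℝ), ‖W * ((t : ℂ) + ((s : ℝ) : ℂ) * I - (u : ℂ))⁻¹‖ ≤ ‖W‖ / |s| := by
      intro W u
      have him : |s| ≤ ‖(t : ℂ) + ((s : ℝ) : ℂ) * I - (u : ℂ)‖ := by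
        have e : ((t : ℂ) + ((s : ℝ) : ℂ) * I - (u : ℂ)).im = s := by simp
        calc |s| = |((t : ℂ) + ((s : ℝ) : ℂ) * I - (u : ℂ)).im| := by rw [e]
          _ ≤ ‖((t : ℂ) + ((s : ℝ) : ℂ) * I - (u : ℂ))‖ := Complex.abs_im_le_norm _
          _ = ‖(t : ℂ) + ((s : ℝ) : ℂ) * I - (u : ℂ)‖ := rfl
      rw [norm_mul, norm_inv, div_eq_mul_inv]
      exact mul_le_mul_of_nonneg_left (inv_anti₀ hs0 him) (norm_nonneg W)
    have hDdiv : D / |s| = ‖P * Eab x a‖ / |s| + ‖Q * Eab x b‖ / |s| := by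
      rw [hD, add_div]
    have hnorm3 : ‖fShift a b x ((t : ℂ) + ((s : ℝ) : ℂ) * I)
          + P * Eab x a * ((t : ℂ) + ((s : ℝ) : ℂ) * I - (a : ℂ))⁻¹
          + Q * Eab x b * ((t : ℂ) + ((s : ℝ) : ℂ) * I - (b : ℂ))⁻¹‖
        ≤ ‖fShift a b x ((t : ℂ) + ((s : ℝ) : ℂ) * I)‖
          + ‖P * Eab x a * ((t : ℂ) + ((s : ℝ) : ℂ) * I - (a : ℂ))⁻¹‖
          + ‖Q * Eab x b * ((t : ℂ) + ((s : ℝ) : ℂ) * I - (b : ℂ))⁻¹‖ :=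
      le_trans (norm_add_le _ _) (add_le_add_left (norm_add_le _ _) _)
    have := add_le_add (add_le_add hb1 (hb2 (P * Eab x a) a)) (hb2 (Q * Eab x b) b)
    rw [hDdiv]
    linarith
  -- the bound tends to zero
  have htend0 : Tendsto (fun T : ℝ => (C1 * Real.exp (-c * T ^ 2) + D / T) * |c' - c|)
      atTop (𝓝 0) := by
    have g1 : Tendsto (fun T : ℝ => Real.exp (-c * T ^ 2)) atTop (𝓝 0) := by
      apply Real.tendsto_exp_atBot.comp
      have h := (tendsto_pow_atTop (two_ne_zero)).atTop_mul_const_of_neg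
        (neg_lt_zero.mpr hc0) (α := ℝ)
      simpa [mul_comm] using h
    have g2 : Tendsto (fun T : ℝ => D / T) atTop (𝓝 0) := tendsto_const_nhds.div_atTop tendsto_id
    have := ((g1.const_mul C1).add g2).mul_const |c' - c|
    simpa using this
  have hTop : Tendsto (fun T : ℝ => ∫ t in c..c', G ((t : ℂ) + ((T : ℝ) : ℂ) * I)) atTop (𝓝 0) := by
    apply squeeze_zero_norm' _ htend0
    filter_upwards [eventually_ge_atTop (1 : ℝ)] with T hT
    have habsT : |T| = T := abs_of_nonneg (by linarith)
    have := hhoriz T (by rw [habsT]; exact hT)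
    rwa [habsT] at this
  have hBot : Tendsto (fun T : ℝ => ∫ t in c..c', G ((t : ℂ) + ((-T : ℝ) : ℂ) * I))
      atTop (𝓝 0) := by
    apply squeeze_zero_norm' _ htend0
    filter_upwards [eventually_ge_atTop (1 : ℝ)] with T hT
    have habsT : |(-T)| = T := by rw [abs_neg]; exact abs_of_nonneg (by linarith)
    have := hhoriz (-T) (by rw [habsT]; exact hT)
    rw [habsT] at this
    simpa [neg_sq] using this
  -- difference of vertical integrals of G tends to 0
  have hVdiff0 : Tendsto (fun T : ℝ =>
      (∫ y in (-T)..T, G ((c' : ℂ) + (y : ℂ) * I)) - ∫ y in (-T)..T, G ((c : ℂ) + (y : ℂ) * I))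
      atTop (𝓝 0) := by
    have heq : ∀ T : ℝ,
        (∫ y in (-T)..T, G ((c' : ℂ) + (y : ℂ) * I)) - ∫ y in (-T)..T, G ((c : ℂ) + (y : ℂ) * I)
        = -I * ((∫ t in c..c', G ((t : ℂ) + ((T : ℝ) : ℂ) * I))
            - ∫ t in c..c', G ((t : ℂ) + ((-T : ℝ) : ℂ) * I)) := by
      intro T
      have h := rect T
      rw [smul_eq_mul, smul_eq_mul] at h
      have hI : Complex.I * Complex.I = -1 := Complex.I_mul_I
      linear_combination (-I) * h
        + ((∫ y in (-T)..T, G ((c' : ℂ) + (y : ℂ) * I))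
            - ∫ y in (-T)..T, G ((c : ℂ) + (y : ℂ) * I)) * hI
    have h2 := (hTop.sub hBot).const_mul (-I)
    refine Tendsto.congr (fun T => (heq T).symm) ?_
    simpa using h2
  -- decomposition of vertical integrals of G
  have hVdec : ∀ (σ : ℝ), σ ≠ a → σ ≠ b → ∀ T : ℝ,
      (∫ y in (-T)..T, G ((σ : ℂ) + (y : ℂ) * I))
        = (∫ y in (-T)..T, fShift a b x ((σ : ℂ) + (y : ℂ) * I))
          + P * Eab x a * ((2 * Real.arctan (T / (σ - a)) : ℝ) : ℂ)
          + Q * Eab x b * ((2 * Real.arctan (T / (σ - b)) : ℝ) : ℂ) := by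
    intro σ hσa hσb T
    have hka : σ - a ≠ 0 := sub_ne_zero.mpr hσa
    have hkb : σ - b ≠ 0 := sub_ne_zero.mpr hσb
    have hlin : Continuous fun y : ℝ => ((y : ℂ) * I) :=
      Complex.continuous_ofReal.mul continuous_const
    have hpa : Continuous fun y : ℝ => (((σ - a : ℝ) : ℂ) + (y : ℂ) * I)⁻¹ := by
      apply Continuous.inv₀ (continuous_const.add hlin)
      intro y h; apply hka; simpa using congrArg Complex.re h
    have hpb : Continuous fun y : ℝ => (((σ - b : ℝ) : ℂ) + (y : ℂ) * I)⁻¹ := by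
      apply Continuous.inv₀ (continuous_const.add hlin)
      intro y h; apply hkb; simpa using congrArg Complex.re h
    have hptwise : Set.EqOn (fun y : ℝ => G ((σ : ℂ) + (y : ℂ) * I))
        (fun y : ℝ => fShift a b x ((σ : ℂ) + (y : ℂ) * I)
          + P * Eab x a * (((σ - a : ℝ) : ℂ) + (y : ℂ) * I)⁻¹
          + Q * Eab x b * (((σ - b : ℝ) : ℂ) + (y : ℂ) * I)⁻¹) (Set.uIcc (-T) T) := by
      intro y _
      have e1 : (σ : ℂ) + (y : ℂ) * I - (a : ℂ) = ((σ - a : ℝ) : ℂ) + (y : ℂ) * I := by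
        push_cast; ring
      have e2 : (σ : ℂ) + (y : ℂ) * I - (b : ℂ) = ((σ - b : ℝ) : ℂ) + (y : ℂ) * I := by
        push_cast; ring
      simp only
      rw [hGeq _ (line_ne hσa y) (line_ne hσb y), e1, e2]
    rw [intervalIntegral.integral_congr hptwise]
    have i1 : IntervalIntegrable (fun y : ℝ => fShift a b x ((σ : ℂ) + (y : ℂ) * I))
        volume (-T) T := (continuous_line a b x σ hσa hσb).intervalIntegrable _ _
    have i2 : IntervalIntegrable
        (fun y : ℝ => P * Eab x a * (((σ - a : ℝ) : ℂ) + (y : ℂ) * I)⁻¹) volume (-T) T :=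
      ((continuous_const.mul hpa).intervalIntegrable _ _)
    have i3 : IntervalIntegrable
        (fun y : ℝ => Q * Eab x b * (((σ - b : ℝ) : ℂ) + (y : ℂ) * I)⁻¹) volume (-T) T :=
      ((continuous_const.mul hpb).intervalIntegrable _ _)
    rw [intervalIntegral.integral_add (i1.add i2) i3, intervalIntegral.integral_add i1 i2,
      intervalIntegral.integral_const_mul, intervalIntegral.integral_const_mul,
      pole_integral hka T, pole_integral hkb T]
  -- limits of the vertical integrals
  have hIc : Tendsto (fun T : ℝ => ∫ y in (-T)..T, fShift a b x ((c : ℂ) + (y : ℂ) * I)) atTop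
      (𝓝 (∫ y : ℝ, fShift a b x ((c : ℂ) + (y : ℂ) * I))) :=
    intervalIntegral_tendsto_integral int_c tendsto_neg_atTop_atBot tendsto_id
  have hIc' : Tendsto (fun T : ℝ => ∫ y in (-T)..T, fShift a b x ((c' : ℂ) + (y : ℂ) * I)) atTop
      (𝓝 (∫ y : ℝ, fShift a b x ((c' : ℂ) + (y : ℂ) * I))) :=
    intervalIntegral_tendsto_integral int_c' tendsto_neg_atTop_atBot tendsto_id
  have hVc : Tendsto (fun T : ℝ => ∫ y in (-T)..T, G ((c : ℂ) + (y : ℂ) * I)) atTop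
      (𝓝 ((∫ y : ℝ, fShift a b x ((c : ℂ) + (y : ℂ) * I))
        + P * Eab x a * ((-Real.pi : ℝ) : ℂ) + Q * Eab x b * ((-Real.pi : ℝ) : ℂ))) := by
    refine Tendsto.congr (fun T => (hVdec c hca.ne hcb.ne T).symm) ?_
    exact (hIc.add ((tendsto_two_arctan_neg (by linarith : c - a < 0)).const_mul
      (P * Eab x a))).add ((tendsto_two_arctan_neg (by linarith : c - b < 0)).const_mul
      (Q * Eab x b))
  have hVc' : Tendsto (fun T : ℝ => ∫ y in (-T)..T, G ((c' : ℂ) + (y : ℂ) * I)) atTop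
      (𝓝 ((∫ y : ℝ, fShift a b x ((c' : ℂ) + (y : ℂ) * I))
        + P * Eab x a * ((Real.pi : ℝ) : ℂ) + Q * Eab x b * ((Real.pi : ℝ) : ℂ))) := by
    refine Tendsto.congr (fun T => (hVdec c' hac'.ne' hbc'.ne' T).symm) ?_
    exact (hIc'.add ((tendsto_two_arctan_pos (by linarith : 0 < c' - a)).const_mul
      (P * Eab x a))).add ((tendsto_two_arctan_pos (by linarith : 0 < c' - b)).const_mul
      (Q * Eab x b))
  have key := tendsto_nhds_unique (hVc'.sub hVc) hVdiff0
  -- final algebra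
  have hπ : (Real.pi : ℂ) ≠ 0 := by exact_mod_cast Real.pi_ne_zero
  have hEq2 : (∫ y : ℝ, fShift a b x ((c : ℂ) + (y : ℂ) * I))
      = (∫ y : ℝ, fShift a b x ((c' : ℂ) + (y : ℂ) * I))
        + 2 * (Real.pi : ℂ) * (P * Eab x a + Q * Eab x b) := by
    push_cast at key
    linear_combination -key
  have hres : P * Eab x a + Q * Eab x b
      = 2 * (((a : ℂ) + b) / ((a : ℂ) - b)) * ((b : ℂ) * Eab x b - (a : ℂ) * Eab x a) := by
    rw [hP, hQ]
    field_simp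
    ring
  have eEa : Complex.exp (-(x : ℂ) * a + (a : ℂ) ^ 3 / 3) = Eab x a := rfl
  have eEb : Complex.exp (-(x : ℂ) * b + (b : ℂ) ^ 3 / 3) = Eab x b := rfl
  rw [eEa, eEb, hEq2, ← hres]
  have h2π : (2 * (Real.pi : ℂ)) ≠ 0 := by
    simp [hπ]
  field_simp
  have hJ : (∫ y : ℝ, fShift a b x ((c' : ℂ) + I * (y : ℂ))) = ∫ y : ℝ, fShift a b x ((c' : ℂ) + (y : ℂ) * I) := by
    congr 1; ext y; ring_nf
  rw [hJ]
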